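/- There exists a constant c > 0 such that for every n ≥ 2 there exist n closed disks B₁,…,Bₙ with radii r₁,…,rₙ > 0, contained in the unit square U = [0,1]², with pairwise disjoint interiors, each intersecting the frontier of U, and with ∑ᵢ rᵢ ≥ c · log n. (Lower bound part of Theorem 1: the O(log n) bound on the total perimeter of boundary-touching disk packings in the unit square is best possible.) -/

import Mathlib

open MeasureTheory Metric Set

/-- The unit square `[0,1]² ⊆ ℝ²`. -/
def unitSquare : Set (EuclideanSpace ℝ (Fin 2)) :=
  {p | p 0 ∈ Set.Icc (0 : ℝ) 1 ∧ p 1 ∈ Set.Icc (0 : ℝ) 1}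

noncomputable def mkPt (a b : ℝ) : EuclideanSpace ℝ (Fin 2) := WithLp.toLp 2 ![a, b]

@[simp] lemma mkPt_zero (a b : ℝ) : mkPt a b 0 = a := rfl
@[simp] lemma mkPt_one (a b : ℝ) : mkPt a b 1 = b := rfl

lemma dist_mkPt (a b c d : ℝ) :
    dist (mkPt a b) (mkPt c d) = Real.sqrt ((a - c)^2 + (b - d)^2) := by
  rw [EuclideanSpace.dist_eq, Fin.sum_univ_two]
  simp [mkPt, Real.dist_eq, sq_abs]

lemma coord_dist_le (p q : EuclideanSpace ℝ (Fin 2)) (i : Fin 2) :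
    |p i - q i| ≤ dist p q := by
  rw [EuclideanSpace.dist_eq]
  have h1 : |p i - q i| = Real.sqrt ((p i - q i)^2) := (Real.sqrt_sq_eq_abs _).symm
  rw [h1]
  apply Real.sqrt_le_sqrt
  have : dist (p i) (q i) ^ 2 = (p i - q i)^2 := by rw [Real.dist_eq, sq_abs]
  calc (p i - q i)^2 = dist (p i) (q i) ^2 := this.symm
    _ ≤ ∑ j, dist (p j) (q j) ^ 2 :=
      Finset.single_le_sum (f := fun j => dist (p j) (q j)^2)
        (fun j _ => sq_nonneg _) (Finset.mem_univ i)

lemma ball_subset_unitSquare {a b r : ℝ} (h1 : r ≤ a) (h2 : a ≤ 1 - r)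
    (h3 : r ≤ b) (h4 : b ≤ 1 - r) :
    closedBall (mkPt a b) r ⊆ unitSquare := by
  intro p hp
  rw [mem_closedBall] at hp
  have h0 := (abs_le.1 ((coord_dist_le p (mkPt a b) 0).trans hp))
  have hone := (abs_le.1 ((coord_dist_le p (mkPt a b) 1).trans hp))
  simp only [mkPt_zero, mkPt_one] at h0 hone
  constructor
  · constructor <;> nlinarith [h0.1, h0.2]
  · constructor <;> nlinarith [hone.1, hone.2]

lemma disjoint_balls {a b r a' b' r' : ℝ} (hr : 0 < r) (hr' : 0 < r')
    (h : (r + r')^2 ≤ (a - a')^2 + (b - b')^2) :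
    Disjoint (interior (closedBall (mkPt a b) r))
             (interior (closedBall (mkPt a' b') r')) := by
  rw [interior_closedBall _ hr.ne', interior_closedBall _ hr'.ne']
  apply ball_disjoint_ball
  rw [dist_mkPt]
  have := Real.sqrt_le_sqrt h
  rwa [Real.sqrt_sq (by positivity)] at this

-- frontier points
lemma bot_mem_frontier {a : ℝ} (ha : 0 ≤ a) (ha' : a ≤ 1) :
    mkPt a 0 ∈ frontier unitSquare := by
  constructor
  · apply subset_closure
    exact ⟨⟨ha, ha'⟩, le_refl 0, zero_le_one⟩
  · intro h
    rw [mem_interior_iff_mem_nhds, Metric.mem_nhds_iff] at h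
    rcases h with ⟨ε, hε, hb⟩
    have : mkPt a (-(ε/2)) ∈ unitSquare := by
      apply hb
      rw [mem_ball, dist_mkPt]
      rw [show a - a = (0:ℝ) by ring, show -(ε/2) - 0 = -(ε/2) by ring]
      rw [show (0:ℝ)^2 + (-(ε/2))^2 = (ε/2)^2 by ring, Real.sqrt_sq (by linarith)]
      linarith
    have := this.2.1
    simp only [mkPt_one] at this
    linarith

lemma top_mem_frontier {a : ℝ} (ha : 0 ≤ a) (ha' : a ≤ 1) :
    mkPt a 1 ∈ frontier unitSquare := by
  constructor
  · apply subset_closure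
    exact ⟨⟨ha, ha'⟩, zero_le_one, le_refl 1⟩
  · intro h
    rw [mem_interior_iff_mem_nhds, Metric.mem_nhds_iff] at h
    rcases h with ⟨ε, hε, hb⟩
    have : mkPt a (1 + ε/2) ∈ unitSquare := by
      apply hb
      rw [mem_ball, dist_mkPt]
      rw [show a - a = (0:ℝ) by ring, show (1:ℝ) + ε/2 - 1 = ε/2 by ring]
      rw [show (0:ℝ)^2 + (ε/2)^2 = (ε/2)^2 by ring, Real.sqrt_sq (by linarith)]
      linarith
    have := this.2.2
    simp only [mkPt_one] at this
    linarith

lemma divisors_eq_filter {b Q : ℕ} (hb : b ∈ Finset.Icc 1 Q) :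
    b.divisors = (Finset.Icc 1 Q).filter (· ∣ b) := by
  simp only [Finset.mem_Icc] at hb
  ext d
  simp only [Nat.mem_divisors, Finset.mem_filter, Finset.mem_Icc]
  constructor
  · rintro ⟨hd, hb0⟩
    refine ⟨⟨Nat.one_le_iff_ne_zero.2 ?_, le_trans (Nat.le_of_dvd (by omega) hd) hb.2⟩, hd⟩
    rintro rfl; simp at hd; omega
  · rintro ⟨⟨h1, h2⟩, hd⟩
    exact ⟨hd, by omega⟩

lemma card_dvd_filter (d Q : ℕ) :
    ((Finset.Icc 1 Q).filter (d ∣ ·)).card = Q / d := by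
  have h : (Finset.Icc 1 Q).filter (d ∣ ·) = (Finset.range (Q+1)).filter (fun k => k ≠ 0 ∧ d ∣ k) := by
    ext k
    simp only [Finset.mem_filter, Finset.mem_Icc, Finset.mem_range]
    constructor
    · rintro ⟨⟨h1, h2⟩, hd⟩; exact ⟨by omega, by omega, hd⟩
    · rintro ⟨h1, h2, hd⟩; exact ⟨⟨by omega, by omega⟩, hd⟩
  rw [h]
  exact Nat.card_multiples' Q d

lemma totient_identity (Q : ℕ) :
    ∑ q ∈ Finset.Icc 1 Q, Nat.totient q * (Q / q) = ∑ b ∈ Finset.Icc 1 Q, b := by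
  have key : ∀ b ∈ Finset.Icc 1 Q, b = ∑ d ∈ (Finset.Icc 1 Q).filter (· ∣ b), Nat.totient d := by
    intro b hb
    rw [← divisors_eq_filter hb, Nat.sum_totient]
  symm
  calc ∑ b ∈ Finset.Icc 1 Q, b
      = ∑ b ∈ Finset.Icc 1 Q, ∑ d ∈ (Finset.Icc 1 Q).filter (· ∣ b), Nat.totient d :=
        Finset.sum_congr rfl key
    _ = ∑ b ∈ Finset.Icc 1 Q, ∑ d ∈ Finset.Icc 1 Q, if d ∣ b then Nat.totient d else 0 := by
        simp [Finset.sum_filter]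
    _ = ∑ d ∈ Finset.Icc 1 Q, ∑ b ∈ Finset.Icc 1 Q, if d ∣ b then Nat.totient d else 0 :=
        Finset.sum_comm
    _ = ∑ d ∈ Finset.Icc 1 Q, Nat.totient d * (Q / d) := by
        refine Finset.sum_congr rfl fun d hd => ?_
        rw [← Finset.sum_filter, Finset.sum_const, smul_eq_mul, card_dvd_filter, mul_comm]

noncomputable def Aphi (k : ℕ) : ℝ := ∑ q ∈ Finset.Icc 1 k, (Nat.totient q : ℝ)/q
noncomputable def Sphi (k : ℕ) : ℝ := ∑ q ∈ Finset.Icc 1 k, (Nat.totient q : ℝ)/q^2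
noncomputable def Hsum (k : ℕ) : ℝ := ∑ q ∈ Finset.Icc 1 k, (1:ℝ)/q

lemma sum_Icc_id (Q : ℕ) : (∑ b ∈ Finset.Icc 1 Q, b) * 2 = Q * (Q+1) := by
  induction Q with
  | zero => simp
  | succ Q ih =>
    rw [Finset.sum_Icc_succ_top (by omega)]
    ring_nf
    ring_nf at ih
    omega

lemma Aphi_ge (k : ℕ) : (k:ℝ)/2 ≤ Aphi k := by
  rcases Nat.eq_zero_or_pos k with rfl | hk
  · simp [Aphi]
  have h1 : ((∑ b ∈ Finset.Icc 1 k, b : ℕ) : ℝ) * 2 = k * (k+1) := by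
    exact_mod_cast congrArg (Nat.cast : ℕ → ℝ) (sum_Icc_id k)
  have h2 : ((∑ b ∈ Finset.Icc 1 k, b : ℕ) : ℝ)
      = ∑ q ∈ Finset.Icc 1 k, (Nat.totient q : ℝ) * ((k/q : ℕ) : ℝ) := by
    rw [← totient_identity k]
    push_cast
    rfl
  have h3 : ∑ q ∈ Finset.Icc 1 k, (Nat.totient q : ℝ) * ((k/q : ℕ) : ℝ)
      ≤ ∑ q ∈ Finset.Icc 1 k, (Nat.totient q : ℝ) * ((k:ℝ)/q) := by
    refine Finset.sum_le_sum fun q hq => ?_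
    exact mul_le_mul_of_nonneg_left (Nat.cast_div_le) (by positivity)
  have h4 : ∑ q ∈ Finset.Icc 1 k, (Nat.totient q : ℝ) * ((k:ℝ)/q)
      = (k:ℝ) * Aphi k := by
    rw [Aphi, Finset.mul_sum]
    refine Finset.sum_congr rfl fun q hq => ?_
    ring
  have hk' : (0:ℝ) < k := by exact_mod_cast hk
  nlinarith [h1, h2 ▸ h3, h4]

lemma Sphi_ge (Q : ℕ) (hQ : 1 ≤ Q) :
    Aphi Q / Q + (1/2) * ∑ q ∈ Finset.Icc 2 Q, (1:ℝ)/q ≤ Sphi Q := by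
  induction Q, hQ using Nat.le_induction with
  | base => simp [Aphi, Sphi]
  | succ Q hQ ih =>
    have hsplitS : Sphi (Q+1) = Sphi Q + (Nat.totient (Q+1) : ℝ)/(Q+1)^2 := by
      rw [Sphi, Sphi, Finset.sum_Icc_succ_top (by omega)]
      push_cast; ring_nf
    have hsplitA : Aphi (Q+1) = Aphi Q + (Nat.totient (Q+1) : ℝ)/(Q+1) := by
      rw [Aphi, Aphi, Finset.sum_Icc_succ_top (by omega)]
      push_cast; ring_nf
    have hsplitH : ∑ q ∈ Finset.Icc 2 (Q+1), (1:ℝ)/q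
        = (∑ q ∈ Finset.Icc 2 Q, (1:ℝ)/q) + 1/(Q+1) := by
      rw [Finset.sum_Icc_succ_top (by omega)]
      push_cast; ring_nf
    have hA := Aphi_ge Q
    have hQ' : (1:ℝ) ≤ Q := by exact_mod_cast hQ
    have hQ0 : (0:ℝ) < Q := by linarith
    have hQ1 : (0:ℝ) < (Q:ℝ)+1 := by linarith
    rw [hsplitS, hsplitA, hsplitH]
    push_cast
    have e1 : (Aphi Q + (Nat.totient (Q+1) : ℝ)/(Q+1))/((Q:ℝ)+1)
        = Aphi Q/((Q:ℝ)+1) + (Nat.totient (Q+1) : ℝ)/((Q:ℝ)+1)^2 := by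
      field_simp
    have e2 : Aphi Q / Q - Aphi Q/((Q:ℝ)+1) = Aphi Q / (Q*((Q:ℝ)+1)) := by
      field_simp; ring
    have e3 : ((Q:ℝ)/2) / (Q*((Q:ℝ)+1)) ≤ Aphi Q / (Q*((Q:ℝ)+1)) := by gcongr
    have e4 : ((Q:ℝ)/2) / (Q*((Q:ℝ)+1)) = 1/(2*((Q:ℝ)+1)) := by field_simp
    have h0 : ((Q:ℝ)+1) ≠ 0 := by positivity
    have e5 : (1/2:ℝ)*(1/((Q:ℝ)+1)) = 1/(2*((Q:ℝ)+1)) := by field_simp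
    have hc : ((Q:ℝ)+1) = ((Q+1 : ℕ) : ℝ) := by push_cast; ring
    linarith [ih, e1, e2, e3, e4, e5]

lemma Hsum_ge_log (Q : ℕ) : Real.log (Q+1) ≤ Hsum Q := by
  induction Q with
  | zero => simp [Hsum]
  | succ Q ih =>
    have hsplit : Hsum (Q+1) = Hsum Q + 1/((Q:ℝ)+1) := by
      rw [Hsum, Hsum, Finset.sum_Icc_succ_top (by omega)]
      push_cast; ring_nf
    have h1 : (0:ℝ) < (Q:ℝ)+1 := by positivity
    have h2 : ((Q:ℝ)+2) = ((Q:ℝ)+1) * (((Q:ℝ)+2)/((Q:ℝ)+1)) := by field_simp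
    have h3 : Real.log ((Q:ℝ)+2) = Real.log ((Q:ℝ)+1) + Real.log (((Q:ℝ)+2)/((Q:ℝ)+1)) := by
      rw [h2, Real.log_mul (by positivity) (by positivity)]
      rw [← h2]
    have h4 : Real.log (((Q:ℝ)+2)/((Q:ℝ)+1)) ≤ ((Q:ℝ)+2)/((Q:ℝ)+1) - 1 :=
      Real.log_le_sub_one_of_pos (by positivity)
    have h5 : ((Q:ℝ)+2)/((Q:ℝ)+1) - 1 = 1/((Q:ℝ)+1) := by field_simp; norm_num
    rw [hsplit]
    push_cast
    have hfix : ((Q:ℝ) + 1 + 1) = (Q:ℝ) + 2 := by ring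
    rw [hfix]
    linarith [ih, h3, h4, h5]

lemma ford_radius_sum_ge (Q : ℕ) (hQ : 1 ≤ Q) :
    (1/4) * Real.log Q - 1/2 ≤ ∑ q ∈ Finset.Icc 2 Q, (Nat.totient q : ℝ)/(2*q^2) := by
  have hS := Sphi_ge Q hQ
  have hA := Aphi_ge Q
  have hH := Hsum_ge_log Q
  have hQ' : (1:ℝ) ≤ Q := by exact_mod_cast hQ
  have hSsplit : Sphi Q = 1 + ∑ q ∈ Finset.Icc 2 Q, (Nat.totient q : ℝ)/q^2 := by
    rw [Sphi, show Finset.Icc 1 Q = insert 1 (Finset.Icc 2 Q) by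
      ext k; simp [Finset.mem_Icc, Finset.mem_insert]; omega]
    rw [Finset.sum_insert (by simp [Finset.mem_Icc])]
    norm_num
  have hHsplit : Hsum Q = 1 + ∑ q ∈ Finset.Icc 2 Q, (1:ℝ)/q := by
    rw [Hsum, show Finset.Icc 1 Q = insert 1 (Finset.Icc 2 Q) by
      ext k; simp [Finset.mem_Icc, Finset.mem_insert]; omega]
    rw [Finset.sum_insert (by simp [Finset.mem_Icc])]
    norm_num
  have hAQ : (1:ℝ)/2 ≤ Aphi Q / Q := by
    rw [le_div_iff₀ (by positivity)]
    linarith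
  have half : ∑ q ∈ Finset.Icc 2 Q, (Nat.totient q : ℝ)/(2*q^2)
      = (1/2) * ∑ q ∈ Finset.Icc 2 Q, (Nat.totient q : ℝ)/q^2 := by
    rw [Finset.mul_sum]
    refine Finset.sum_congr rfl fun q hq => ?_
    ring
  have hlog : Real.log Q ≤ Real.log ((Q:ℝ)+1) := by
    apply Real.log_le_log (by linarith)
    linarith
  rw [half]
  push_cast at hH
  linarith

-- bridge: totient as count of coprimes in [1,q)
lemma filter_coprime_card {q : ℕ} (hq : 2 ≤ q) :
    ((Finset.Ico 1 q).filter fun p => Nat.Coprime p q).card = Nat.totient q := by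
  rw [Nat.totient]
  congr 1
  ext a
  simp only [Finset.mem_filter, Finset.mem_Ico, Finset.mem_range]
  constructor
  · rintro ⟨⟨h1, h2⟩, hc⟩
    exact ⟨h2, (Nat.coprime_comm.1 hc)⟩
  · rintro ⟨h2, hc⟩
    have ha : a ≠ 0 := by
      rintro rfl
      have := Nat.coprime_zero_right q |>.1 hc
      omega
    exact ⟨⟨by omega, h2⟩, Nat.coprime_comm.1 hc⟩

def fordIdx (Q : ℕ) : Finset (ℕ × ℕ) :=
  (Finset.Icc 2 Q).biUnion fun q =>
    ((Finset.Ico 1 q).filter fun p => Nat.Coprime p q).image fun p => (p, q)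

lemma mem_fordIdx {Q p q : ℕ} :
    (p, q) ∈ fordIdx Q ↔ 2 ≤ q ∧ q ≤ Q ∧ 1 ≤ p ∧ p < q ∧ Nat.Coprime p q := by
  simp only [fordIdx, Finset.mem_biUnion, Finset.mem_image, Finset.mem_filter,
    Finset.mem_Ico, Finset.mem_Icc, Prod.mk.injEq]
  constructor
  · rintro ⟨q', ⟨hq1, hq2⟩, p', ⟨⟨hp1, hp2⟩, hc⟩, rfl, rfl⟩
    exact ⟨hq1, hq2, hp1, hp2, hc⟩
  · rintro ⟨h1, h2, h3, h4, h5⟩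
    exact ⟨q, ⟨h1, h2⟩, p, ⟨⟨h3, h4⟩, h5⟩, rfl, rfl⟩

lemma fordIdx_sum (Q : ℕ) (f : ℕ → ℝ) :
    ∑ pq ∈ fordIdx Q, f pq.2 = ∑ q ∈ Finset.Icc 2 Q, (Nat.totient q : ℝ) * f q := by
  rw [fordIdx, Finset.sum_biUnion]
  · refine Finset.sum_congr rfl fun q hq => ?_
    rw [Finset.sum_image (by intro a _ b _ h; exact (Prod.ext_iff.1 h).1)]
    have : (∑ p ∈ (Finset.Ico 1 q).filter (fun p => Nat.Coprime p q), f (p, q).2)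
        = ∑ _p ∈ (Finset.Ico 1 q).filter (fun p => Nat.Coprime p q), f q := rfl
    rw [this, Finset.sum_const, filter_coprime_card (Finset.mem_Icc.1 hq).1, nsmul_eq_mul]
  · intro a ha b hb hab
    apply Finset.disjoint_left.2
    intro pq h1 h2
    simp only [Finset.mem_image, Finset.mem_filter] at h1 h2
    obtain ⟨p1, _, rfl⟩ := h1
    obtain ⟨p2, _, he⟩ := h2
    exact hab ((Prod.ext_iff.1 he).2.symm)

lemma fordIdx_card (Q : ℕ) : (fordIdx Q).card ≤ (Q - 1) * (Q - 1) := by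
  classical
  have h : (fordIdx Q).card = ∑ q ∈ Finset.Icc 2 Q, (((Finset.Ico 1 q).filter fun p => Nat.Coprime p q).card) := by
    rw [fordIdx, Finset.card_biUnion]
    · refine Finset.sum_congr rfl fun q hq => ?_
      rw [Finset.card_image_of_injective _ (by intro a b h; exact (Prod.ext_iff.1 h).1)]
    · intro a ha b hb hab
      apply Finset.disjoint_left.2
      intro pq h1 h2
      simp only [Finset.mem_image, Finset.mem_filter] at h1 h2
      obtain ⟨p1, _, rfl⟩ := h1
      obtain ⟨p2, _, he⟩ := h2
      exact hab ((Prod.ext_iff.1 he).2.symm)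
  rw [h]
  calc ∑ q ∈ Finset.Icc 2 Q, (((Finset.Ico 1 q).filter fun p => Nat.Coprime p q).card)
      ≤ ∑ q ∈ Finset.Icc 2 Q, (Q - 1) := by
        refine Finset.sum_le_sum fun q hq => ?_
        calc _ ≤ (Finset.Ico 1 q).card := Finset.card_filter_le _ _
          _ = q - 1 := by rw [Nat.card_Ico]
          _ ≤ Q - 1 := by have := (Finset.mem_Icc.1 hq).2; omega
    _ ≤ (Q - 1) * (Q - 1) := by
        rw [Finset.sum_const, smul_eq_mul, Nat.card_Icc]
        exact Nat.mul_le_mul_right (Q - 1) (by omega)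

-- ============ disks and index ============

noncomputable def dlt (n : ℕ) : ℝ := 1/(32*n)

def padIdx (m : ℕ) : Finset (ℕ × ℕ) := (Finset.range (m+1)).image fun i => (i, 0)

def idx (n : ℕ) : Finset (ℕ × ℕ) :=
  padIdx (n - 1 - (fordIdx n.sqrt).card) ∪ fordIdx n.sqrt

noncomputable def dsk (n : ℕ) : ℕ × ℕ → ℝ × ℝ × ℝ := fun pq =>
  if pq.2 = 0 then
    (if pq.1 = 0 then ((1:ℝ)/2, 3/4, 1/4) else (2*(dlt n)*pq.1, 1 - dlt n, dlt n))
  else ((pq.1:ℝ)/pq.2, 1/(2*(pq.2:ℝ)^2), 1/(2*(pq.2:ℝ)^2))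

lemma mem_padIdx {m p q : ℕ} : (p, q) ∈ padIdx m ↔ q = 0 ∧ p ≤ m := by
  simp only [padIdx, Finset.mem_image, Finset.mem_range, Prod.mk.injEq]
  constructor
  · rintro ⟨i, hi, rfl, rfl⟩; omega
  · rintro ⟨rfl, hp⟩; exact ⟨p, by omega, rfl, rfl⟩

lemma pad_ford_disjoint {m Q : ℕ} : Disjoint (padIdx m) (fordIdx Q) := by
  rw [Finset.disjoint_left]
  rintro ⟨p, q⟩ h1 h2
  have := (mem_padIdx.1 h1).1
  have := (mem_fordIdx.1 h2).1
  omega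

lemma fordIdx_card_le_pred {n : ℕ} (hn : 2 ≤ n) :
    (fordIdx n.sqrt).card ≤ n - 1 := by
  have hQ1 : 1 ≤ n.sqrt := by
    rw [Nat.le_sqrt]; omega
  have hQQ : n.sqrt * n.sqrt ≤ n := by
    have := Nat.sqrt_le' n
    rwa [pow_two] at this
  have h1 : (fordIdx n.sqrt).card ≤ (n.sqrt - 1) * (n.sqrt - 1) := fordIdx_card n.sqrt
  obtain ⟨k, hk⟩ : ∃ k, n.sqrt = k + 1 := ⟨n.sqrt - 1, by omega⟩
  rw [hk] at h1 hQQ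
  simp only [Nat.add_sub_cancel] at h1
  have hexp : (k + 1) * (k + 1) = k * k + 2 * k + 1 := by ring
  rw [hexp] at hQQ
  have hlt : (fordIdx n.sqrt).card < k * k + 2 * k + 1 := by
    rw [hk]; omega
  omega

lemma card_idx {n : ℕ} (hn : 2 ≤ n) : (idx n).card = n := by
  have hF := fordIdx_card_le_pred hn
  rw [idx, Finset.card_union_of_disjoint pad_ford_disjoint]
  have hp : (padIdx (n - 1 - (fordIdx n.sqrt).card)).card
      = (n - 1 - (fordIdx n.sqrt).card) + 1 := by
    rw [padIdx, Finset.card_image_of_injective _ (by intro a b h; exact (Prod.ext_iff.1 h).1),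
      Finset.card_range]
  rw [hp]
  omega

lemma mem_idx_cases {n : ℕ} {p q : ℕ} (h : (p, q) ∈ idx n) :
    (q = 0 ∧ p ≤ n - 1 - (fordIdx n.sqrt).card) ∨
    (2 ≤ q ∧ q ≤ n.sqrt ∧ 1 ≤ p ∧ p < q ∧ Nat.Coprime p q) := by
  rcases Finset.mem_union.1 h with h | h
  · exact Or.inl (mem_padIdx.1 h)
  · right; exact mem_fordIdx.1 h

-- basic dlt facts
lemma dlt_pos {n : ℕ} (hn : 2 ≤ n) : 0 < dlt n := by
  have : (0:ℝ) < n := by exact_mod_cast (by omega : 0 < n)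
  rw [dlt]; positivity

lemma dlt_le {n : ℕ} (hn : 2 ≤ n) : dlt n ≤ 1/64 := by
  have h : (2:ℝ) ≤ n := by exact_mod_cast hn
  rw [dlt]
  rw [div_le_div_iff₀ (by linarith) (by norm_num)]
  linarith

-- key ford disjointness
lemma ford_ford_disj {p q p' q' : ℕ} (hq : 2 ≤ q) (hq' : 2 ≤ q')
    (hp : 1 ≤ p) (hpq : p < q) (hp' : 1 ≤ p') (hpq' : p' < q')
    (hc : Nat.Coprime p q) (hc' : Nat.Coprime p' q') (hne : (p, q) ≠ (p', q')) :
    (1/(2*(q:ℝ)^2) + 1/(2*(q':ℝ)^2))^2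
      ≤ ((p:ℝ)/q - (p':ℝ)/q')^2 + (1/(2*(q:ℝ)^2) - 1/(2*(q':ℝ)^2))^2 := by
  have hkey : p * q' ≠ p' * q := by
    intro he
    have h1 : q ∣ p * q' := ⟨p', by rw [he]; ring⟩
    have h2 : q ∣ q' := (Nat.Coprime.dvd_of_dvd_mul_left (Nat.coprime_comm.1 hc) h1)
    have h3 : q' ∣ p' * q := ⟨p, by rw [← he]; ring⟩
    have h4 : q' ∣ q := (Nat.Coprime.dvd_of_dvd_mul_left (Nat.coprime_comm.1 hc') h3)
    have h5 : q = q' := Nat.dvd_antisymm h2 h4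
    subst h5
    have hpp : p = p' := Nat.eq_of_mul_eq_mul_right (by omega) he
    exact hne (by rw [hpp])
  have hD : 1 ≤ ((p:ℝ)*q' - (p':ℝ)*q)^2 := by
    have hz : ((p:ℤ) * q' - (p':ℤ) * q) ≠ 0 := by
      intro he
      apply hkey
      have : ((p:ℤ) * q') = ((p':ℤ) * q) := by omega
      exact_mod_cast this
    have h1 : 1 ≤ |((p:ℤ) * q' - (p':ℤ) * q)| := Int.one_le_abs hz
    have h2 : 1 ≤ ((p:ℤ) * q' - (p':ℤ) * q)^2 := by nlinarith [h1, abs_nonneg ((p:ℤ) * q' - (p':ℤ) * q), sq_abs ((p:ℤ) * q' - (p':ℤ) * q)]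
    have : (1:ℝ) ≤ (((p:ℤ) * q' - (p':ℤ) * q : ℤ) : ℝ)^2 := by exact_mod_cast h2
    convert this using 2
    push_cast
    ring
  have hq0 : (0:ℝ) < q := by exact_mod_cast (by omega : 0 < q)
  have hq0' : (0:ℝ) < q' := by exact_mod_cast (by omega : 0 < q')
  have h1 : ((p:ℝ)/q - (p':ℝ)/q')^2 = ((p:ℝ)*q' - (p':ℝ)*q)^2/((q:ℝ)^2*(q':ℝ)^2) := by
    field_simp
  have h2 : 1/((q:ℝ)^2*(q':ℝ)^2) ≤ ((p:ℝ)*q' - (p':ℝ)*q)^2/((q:ℝ)^2*(q':ℝ)^2) := by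
    gcongr
  have e4 : (1/(2*(q:ℝ)^2) + 1/(2*(q':ℝ)^2))^2
      = (1/(2*(q:ℝ)^2) - 1/(2*(q':ℝ)^2))^2 + 1/((q:ℝ)^2*(q':ℝ)^2) := by
    field_simp
    ring
  rw [e4, h1]
  linarith [h2]

@[simp] lemma dsk_big (n : ℕ) : dsk n (0, 0) = (1/2, 3/4, 1/4) := by simp [dsk]
lemma dsk_pad (n : ℕ) {p : ℕ} (hp : p ≠ 0) :
    dsk n (p, 0) = (2*(dlt n)*p, 1 - dlt n, dlt n) := by simp [dsk, hp]
lemma dsk_ford (n : ℕ) {p q : ℕ} (hq : q ≠ 0) :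
    dsk n (p, q) = ((p:ℝ)/q, 1/(2*(q:ℝ)^2), 1/(2*(q:ℝ)^2)) := by simp [dsk, hq]

lemma ford_r_pos {q : ℕ} (hq : 2 ≤ q) : 0 < 1/(2*(q:ℝ)^2) := by
  have h2 : (2:ℝ) ≤ q := by exact_mod_cast hq
  positivity

lemma ford_r_le {q : ℕ} (hq : 2 ≤ q) : 1/(2*(q:ℝ)^2) ≤ 1/8 := by
  have h2 : (2:ℝ) ≤ q := by exact_mod_cast hq
  rw [div_le_div_iff₀ (by positivity) (by norm_num)]
  nlinarith

lemma pad_x_le {n p : ℕ} (hn : 2 ≤ n) (hp : p ≤ n) : 2*(dlt n)*(p:ℝ) ≤ 1/16 := by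
  have hn0 : (0:ℝ) < n := by exact_mod_cast (by omega : 0 < n)
  have hpn : (p:ℝ) ≤ n := by exact_mod_cast hp
  have h1 : 2*(dlt n)*(p:ℝ) ≤ 2*(dlt n)*(n:ℝ) := by
    have := dlt_pos hn
    nlinarith
  have h2 : 2*(dlt n)*(n:ℝ) = 1/16 := by
    rw [dlt]; field_simp; ring
  linarith

lemma nat_ne_sq_ge_one {p p' : ℕ} (h : p ≠ p') : 1 ≤ ((p:ℝ) - p')^2 := by
  have hz : ((p:ℤ) - p') ≠ 0 := by omega
  have h1 : 1 ≤ ((p:ℤ) - p')^2 := by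
    have := Int.one_le_abs hz
    nlinarith [this, sq_abs ((p:ℤ) - p')]
  have : (1:ℝ) ≤ (((p:ℤ) - p' : ℤ) : ℝ)^2 := by exact_mod_cast h1
  convert this using 2
  push_cast
  ring

set_option maxHeartbeats 2000000 in
lemma idx_disj {n : ℕ} (hn : 2 ≤ n) {a b : ℕ × ℕ}
    (ha : a ∈ idx n) (hb : b ∈ idx n) (hne : a ≠ b) :
    ((dsk n a).2.2 + (dsk n b).2.2)^2
      ≤ ((dsk n a).1 - (dsk n b).1)^2 + ((dsk n a).2.1 - (dsk n b).2.1)^2 := by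
  obtain ⟨p, q⟩ := a
  obtain ⟨p', q'⟩ := b
  have hδ0 := dlt_pos hn
  have hδ64 := dlt_le hn
  have hF := fordIdx_card_le_pred hn
  rcases mem_idx_cases ha with ⟨rfl, hpm⟩ | ⟨hq2, hqQ, hp1, hpq, hcop⟩ <;>
    rcases mem_idx_cases hb with ⟨rfl, hpm'⟩ | ⟨hq2', hqQ', hp1', hpq', hcop'⟩
  · -- both pads/big
    have hpp : p ≠ p' := by intro h; exact hne (by rw [h])
    have hpn : p ≤ n := by omega
    have hpn' : p' ≤ n := by omega
    rcases Nat.eq_zero_or_pos p with rfl | hp0 <;> rcases Nat.eq_zero_or_pos p' with rfl | hp0'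
    · omega
    · -- big vs pad
      rw [dsk_big, dsk_pad n (by omega)]
      simp only
      have hx := pad_x_le hn hpn'
      have hx0 : 0 ≤ 2*(dlt n)*(p':ℝ) := by positivity
      nlinarith [hx, hx0, hδ0, hδ64]
    · -- pad vs big
      rw [dsk_big, dsk_pad n (by omega)]
      simp only
      have hx := pad_x_le hn hpn
      have hx0 : 0 ≤ 2*(dlt n)*(p:ℝ) := by positivity
      nlinarith [hx, hx0, hδ0, hδ64]
    · -- pad vs pad
      rw [dsk_pad n (by omega), dsk_pad n (by omega)]
      simp only
      have hd := nat_ne_sq_ge_one hpp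
      have e : (2*(dlt n)*(p:ℝ) - 2*(dlt n)*(p':ℝ))^2 = 4*(dlt n)^2*((p:ℝ) - p')^2 := by ring
      nlinarith [hd, e, hδ0, sq_nonneg ((1:ℝ) - dlt n - (1 - dlt n))]
  · -- pad/big vs ford
    rw [dsk_ford n (show q' ≠ 0 by omega)]
    have hr0 := ford_r_pos hq2'
    have hr8 := ford_r_le hq2'
    rcases Nat.eq_zero_or_pos p with rfl | hp0
    · rw [dsk_big]
      simp only
      nlinarith [sq_nonneg ((1:ℝ)/2 - (p':ℝ)/q'), hr0, hr8]
    · rw [dsk_pad n (by omega)]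
      simp only
      nlinarith [sq_nonneg (2*(dlt n)*(p:ℝ) - (p':ℝ)/q'), hr0, hr8, hδ0, hδ64]
  · -- ford vs pad/big
    rw [dsk_ford n (show q ≠ 0 by omega)]
    have hr0 := ford_r_pos hq2
    have hr8 := ford_r_le hq2
    rcases Nat.eq_zero_or_pos p' with rfl | hp0
    · rw [dsk_big]
      simp only
      nlinarith [sq_nonneg ((p:ℝ)/q - (1:ℝ)/2), hr0, hr8]
    · rw [dsk_pad n (by omega)]
      simp only
      nlinarith [sq_nonneg ((p:ℝ)/q - 2*(dlt n)*(p':ℝ)), hr0, hr8, hδ0, hδ64]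
  · -- ford vs ford
    rw [dsk_ford n (show q ≠ 0 by omega), dsk_ford n (show q' ≠ 0 by omega)]
    simp only
    exact ford_ford_disj hq2 hq2' hp1 hpq hp1' hpq' hcop hcop' hne

lemma dist_vert (a b c : ℝ) : dist (mkPt a b) (mkPt a c) = |b - c| := by
  rw [dist_mkPt, sub_self]
  rw [show (0:ℝ)^2 + (b-c)^2 = (b-c)^2 by ring, Real.sqrt_sq_eq_abs]

lemma idx_r_pos {n : ℕ} (hn : 2 ≤ n) {pq : ℕ × ℕ} (h : pq ∈ idx n) :
    0 < (dsk n pq).2.2 := by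
  obtain ⟨p, q⟩ := pq
  rcases mem_idx_cases h with ⟨rfl, hpm⟩ | ⟨hq2, hqQ, hp1, hpq, hcop⟩
  · rcases Nat.eq_zero_or_pos p with rfl | hp0
    · rw [dsk_big]; norm_num
    · rw [dsk_pad n (by omega)]; exact dlt_pos hn
  · rw [dsk_ford n (show q ≠ 0 by omega)]
    exact ford_r_pos hq2

lemma idx_subset {n : ℕ} (hn : 2 ≤ n) {pq : ℕ × ℕ} (h : pq ∈ idx n) :
    Metric.closedBall (mkPt (dsk n pq).1 (dsk n pq).2.1) (dsk n pq).2.2 ⊆ unitSquare := by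
  obtain ⟨p, q⟩ := pq
  have hδ0 := dlt_pos hn
  have hδ64 := dlt_le hn
  have hF := fordIdx_card_le_pred hn
  rcases mem_idx_cases h with ⟨rfl, hpm⟩ | ⟨hq2, hqQ, hp1, hpq, hcop⟩
  · rcases Nat.eq_zero_or_pos p with rfl | hp0
    · rw [dsk_big]
      exact ball_subset_unitSquare (by norm_num) (by norm_num) (by norm_num) (by norm_num)
    · rw [dsk_pad n (by omega)]
      have hx := pad_x_le hn (show p ≤ n by omega)
      have hx1 : dlt n ≤ 2*(dlt n)*(p:ℝ) := by
        have hp1 : (1:ℝ) ≤ p := by exact_mod_cast hp0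
        nlinarith
      exact ball_subset_unitSquare hx1
        (show 2*(dlt n)*(p:ℝ) ≤ 1 - dlt n by linarith)
        (show dlt n ≤ 1 - dlt n by linarith)
        (show (1:ℝ) - dlt n ≤ 1 - dlt n from le_refl _)
  · rw [dsk_ford n (show q ≠ 0 by omega)]
    have hA : (2:ℝ) ≤ q := by exact_mod_cast hq2
    have hP1 : (1:ℝ) ≤ p := by exact_mod_cast hp1
    have hPA : (p:ℝ) ≤ (q:ℝ) - 1 := by
      have : (p:ℝ) + 1 ≤ q := by exact_mod_cast hpq
      linarith
    have hr8 := ford_r_le hq2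
    have hr0 := ford_r_pos hq2
    have key1 : 1/(2*(q:ℝ)^2) ≤ (p:ℝ)/q := by
      rw [div_le_div_iff₀ (by positivity) (by positivity)]
      nlinarith
    have key2 : (p:ℝ)/q ≤ 1 - 1/(2*(q:ℝ)^2) := by
      rw [div_le_iff₀ (by positivity)]
      have h14 : 1/(2*(q:ℝ)) ≤ 1/4 := by
        rw [div_le_div_iff₀ (by positivity) (by norm_num)]
        linarith
      have e : (1 - 1/(2*(q:ℝ)^2))*(q:ℝ) = (q:ℝ) - 1/(2*(q:ℝ)) := by
        field_simp
      rw [e]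
      linarith
    exact ball_subset_unitSquare key1 key2
      (le_refl _)
      (show 1/(2*(q:ℝ)^2) ≤ 1 - 1/(2*(q:ℝ)^2) by linarith)

lemma idx_touch {n : ℕ} (hn : 2 ≤ n) {pq : ℕ × ℕ} (h : pq ∈ idx n) :
    (Metric.closedBall (mkPt (dsk n pq).1 (dsk n pq).2.1) (dsk n pq).2.2
      ∩ frontier unitSquare).Nonempty := by
  obtain ⟨p, q⟩ := pq
  have hδ0 := dlt_pos hn
  have hδ64 := dlt_le hn
  have hF := fordIdx_card_le_pred hn
  rcases mem_idx_cases h with ⟨rfl, hpm⟩ | ⟨hq2, hqQ, hp1, hpq, hcop⟩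
  · rcases Nat.eq_zero_or_pos p with rfl | hp0
    · refine ⟨mkPt (1/2) 1, Metric.mem_closedBall.2 ?_, top_mem_frontier (by norm_num) (by norm_num)⟩
      rw [dsk_big]
      rw [show ((1:ℝ)/2, (3:ℝ)/4, (1:ℝ)/4).1 = 1/2 from rfl]
      rw [dist_vert]
      rw [show |1 - (3:ℝ)/4| = 1/4 by rw [abs_of_nonneg] <;> norm_num]
    · rw [dsk_pad n (by omega)]
      have hx := pad_x_le hn (show p ≤ n by omega)
      have hx0 : (0:ℝ) ≤ 2*(dlt n)*(p:ℝ) := by positivity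
      refine ⟨mkPt (2*(dlt n)*(p:ℝ)) 1, Metric.mem_closedBall.2 ?_,
        top_mem_frontier hx0 (by linarith)⟩
      rw [dist_vert]
      rw [show |1 - (1 - dlt n)| = dlt n by rw [abs_of_nonneg] <;> linarith]
  · rw [dsk_ford n (show q ≠ 0 by omega)]
    have hA : (2:ℝ) ≤ q := by exact_mod_cast hq2
    have hP1 : (1:ℝ) ≤ p := by exact_mod_cast hp1
    have hPA : (p:ℝ) ≤ (q:ℝ) - 1 := by
      have : (p:ℝ) + 1 ≤ q := by exact_mod_cast hpq
      linarith
    have hr0 := ford_r_pos hq2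
    have ha0 : (0:ℝ) ≤ (p:ℝ)/q := by positivity
    have ha1 : (p:ℝ)/q ≤ 1 := by
      rw [div_le_one (by positivity)]
      linarith
    refine ⟨mkPt ((p:ℝ)/q) 0, Metric.mem_closedBall.2 ?_, bot_mem_frontier ha0 ha1⟩
    rw [dist_vert]
    rw [show |0 - 1/(2*(q:ℝ)^2)| = 1/(2*(q:ℝ)^2) by rw [abs_of_nonpos] <;> linarith]

lemma idx_sum_ge {n : ℕ} (hn : 2 ≤ n) :
    (1:ℝ)/4 + ∑ q ∈ Finset.Icc 2 n.sqrt, (Nat.totient q : ℝ)/(2*q^2)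
      ≤ ∑ pq ∈ idx n, (dsk n pq).2.2 := by
  rw [idx, Finset.sum_union pad_ford_disjoint]
  have hnn : ∀ pq ∈ padIdx (n - 1 - (fordIdx n.sqrt).card), 0 ≤ (dsk n pq).2.2 := by
    rintro ⟨p, q⟩ hpq
    obtain ⟨rfl, -⟩ := mem_padIdx.1 hpq
    rcases Nat.eq_zero_or_pos p with rfl | hp0
    · rw [dsk_big]; norm_num
    · rw [dsk_pad n (by omega)]; exact (dlt_pos hn).le
  have h1 : (1:ℝ)/4 ≤ ∑ pq ∈ padIdx (n - 1 - (fordIdx n.sqrt).card), (dsk n pq).2.2 := by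
    have hmem : ((0:ℕ), (0:ℕ)) ∈ padIdx (n - 1 - (fordIdx n.sqrt).card) :=
      mem_padIdx.2 ⟨rfl, by omega⟩
    have h := Finset.single_le_sum (f := fun pq => (dsk n pq).2.2) hnn hmem
    simp only [dsk_big] at h
    exact le_trans (by norm_num) h
  have h2 : ∑ pq ∈ fordIdx n.sqrt, (dsk n pq).2.2
      = ∑ q ∈ Finset.Icc 2 n.sqrt, (Nat.totient q : ℝ)/(2*q^2) := by
    calc ∑ pq ∈ fordIdx n.sqrt, (dsk n pq).2.2
        = ∑ pq ∈ fordIdx n.sqrt, (fun q : ℕ => 1/(2*(q:ℝ)^2)) pq.2 := by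
          refine Finset.sum_congr rfl fun pq hpq => ?_
          obtain ⟨p, q⟩ := pq
          have := (mem_fordIdx.1 hpq).1
          rw [dsk_ford n (show q ≠ 0 by omega)]
      _ = ∑ q ∈ Finset.Icc 2 n.sqrt, (Nat.totient q : ℝ) * ((fun q : ℕ => 1/(2*(q:ℝ)^2)) q) :=
          fordIdx_sum n.sqrt (fun q : ℕ => 1/(2*(q:ℝ)^2))
      _ = ∑ q ∈ Finset.Icc 2 n.sqrt, (Nat.totient q : ℝ)/(2*q^2) := by
          refine Finset.sum_congr rfl fun q hq => ?_
          show (Nat.totient q : ℝ) * (1/(2*(q:ℝ)^2)) = _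
          ring
  rw [h2]
  linarith


/-- Theorem 1, lower bound: There is `c > 0` such that for every `n ≥ 2`
there exist `n` disks packed in the unit square, each touching its boundary, whose radii
sum to at least `c · log n`. -/
theorem exists_disks_touching_square_boundary_log_lower :
    ∃ c : ℝ, 0 < c ∧ ∀ n : ℕ, 2 ≤ n →
      ∃ (x : Fin n → EuclideanSpace ℝ (Fin 2)) (r : Fin n → ℝ),
        (∀ i, 0 < r i) ∧
        (∀ i, closedBall (x i) (r i) ⊆ unitSquare) ∧
        (∀ i j, i ≠ j →
          Disjoint (interior (closedBall (x i) (r i)))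
                   (interior (closedBall (x j) (r j)))) ∧
        (∀ i, (closedBall (x i) (r i) ∩ frontier unitSquare).Nonempty) ∧
        c * Real.log n ≤ ∑ i, r i := by
  refine ⟨1/200, by norm_num, fun n hn => ?_⟩
  have hcoe : Fintype.card ↑(idx n) = n := by rw [Fintype.card_coe]; exact card_idx hn
  let e : ↑(idx n) ≃ Fin n := Fintype.equivFinOfCardEq hcoe
  refine ⟨fun i => mkPt (dsk n (e.symm i).1).1 (dsk n (e.symm i).1).2.1,
          fun i => (dsk n (e.symm i).1).2.2, ?_, ?_, ?_, ?_, ?_⟩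
  · exact fun i => idx_r_pos hn (e.symm i).2
  · exact fun i => idx_subset hn (e.symm i).2
  · intro i j hij
    have hne : ((e.symm i).1 : ℕ × ℕ) ≠ (e.symm j).1 := by
      intro h
      exact hij (by
        have : e.symm i = e.symm j := Subtype.ext h
        have := congrArg e this
        simpa using this)
    have hkey := idx_disj hn (e.symm i).2 (e.symm j).2 hne
    exact disjoint_balls (idx_r_pos hn (e.symm i).2) (idx_r_pos hn (e.symm j).2) hkey
  · exact fun i => idx_touch hn (e.symm i).2
  · have hsum : ∑ i, (dsk n ((e.symm i) : ℕ × ℕ)).2.2 = ∑ pq ∈ idx n, (dsk n pq).2.2 := by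
      rw [Equiv.sum_comp e.symm (fun a : ↑(idx n) => (dsk n (a : ℕ × ℕ)).2.2)]
      exact Finset.sum_coe_sort (idx n) (fun pq => (dsk n pq).2.2)
    rw [hsum]
    have hmain := idx_sum_ge hn
    have hfordnn : (0:ℝ) ≤ ∑ q ∈ Finset.Icc 2 n.sqrt, (Nat.totient q : ℝ)/(2*q^2) := by
      refine Finset.sum_nonneg fun q hq => ?_
      positivity
    have hn1 : (1:ℝ) ≤ n := by exact_mod_cast (by omega : 1 ≤ n)
    rcases le_or_gt (Real.log n) 50 with hlog | hlog
    · have h0 : 0 ≤ Real.log n := Real.log_nonneg hn1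
      nlinarith [hmain, hfordnn]
    · -- large n
      have hnpos : (0:ℝ) < n := by linarith
      have hlogle : Real.log n ≤ (n:ℝ) - 1 := Real.log_le_sub_one_of_pos hnpos
      have hn51 : (51:ℝ) ≤ n := by linarith
      have hn16 : (16:ℕ) ≤ n := by exact_mod_cast (by linarith : (16:ℝ) ≤ n)
      have hQ4 : 4 ≤ n.sqrt := by
        rw [Nat.le_sqrt]
        omega
      have hQ1 : 1 ≤ n.sqrt := by omega
      have hford := ford_radius_sum_ge n.sqrt hQ1
      have hQr : (4:ℝ) ≤ n.sqrt := by exact_mod_cast hQ4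
      have hsq : (n:ℝ) < ((n.sqrt:ℝ) + 1)^2 := by
        have h := Nat.lt_succ_sqrt n
        have : (n:ℝ) < ((n.sqrt + 1) * (n.sqrt + 1) : ℕ) := by exact_mod_cast h
        push_cast at this
        nlinarith [this]
      have hsqrtlt : Real.sqrt n < (n.sqrt:ℝ) + 1 := by
        rw [show ((n.sqrt:ℝ) + 1) = ((n.sqrt:ℝ) + 1) from rfl]
        have hpos : (0:ℝ) < (n.sqrt:ℝ) + 1 := by linarith
        rw [Real.sqrt_lt' hpos]
        exact hsq
      have h2Q : Real.sqrt n / 2 < (n.sqrt:ℝ) := by linarith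
      have hsqrtpos : 0 < Real.sqrt n := Real.sqrt_pos.2 hnpos
      have hlogQ : Real.log (Real.sqrt n / 2) ≤ Real.log (n.sqrt:ℝ) :=
        Real.log_le_log (by positivity) h2Q.le
      have hlogdiv : Real.log (Real.sqrt n / 2) = Real.log n / 2 - Real.log 2 := by
        rw [Real.log_div hsqrtpos.ne' (by norm_num), Real.log_sqrt hnpos.le]
      have hlog2 : Real.log 2 ≤ 1 := by
        have := Real.log_le_sub_one_of_pos (by norm_num : (0:ℝ) < 2)
        linarith
      rw [hlogdiv] at hlogQ
      nlinarith [hmain, hford, hlogQ, hlog, hlog2]
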